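/- Let k be a non-negative integer and let τ be a locally compact Hausdorff shift-continuous topology on B⁰(B_k) in which the adjoined zero 0* is not isolated. Then for any open neighborhoods U, V of 0* whose closures are compact, the equality U ∩ [n,m] = V ∩ [n,m] holds for all but finitely many pairs (n,m) of non-negative integers. -/

import Mathlib

open Ordinal Set Topology

noncomputable section

/-- The `α`-bicyclic monoid: pairs of ordinals below `ω ^ α`. -/
def Bicyclic (α : Ordinal) : Type 1 :=
  {p : Ordinal × Ordinal // p.1 < ω ^ α ∧ p.2 < ω ^ α}

namespace Bicyclic

variable {α : Ordinal}

def mk (a b : Ordinal) (ha : a < ω ^ α) (hb : b < ω ^ α) : Bicyclic α :=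
  ⟨(a, b), ha, hb⟩

instance : Mul (Bicyclic α) :=
  ⟨fun x y =>
    if x.val.2 ≤ y.val.1 then
      ⟨(x.val.1 + (y.val.1 - x.val.2), y.val.2),
        (principal_add_omega0_opow α) x.2.1
          (lt_of_le_of_lt (Ordinal.sub_le_self _ _) y.2.1),
        y.2.2⟩
    else
      ⟨(x.val.1, y.val.2 + (x.val.2 - y.val.1)),
        x.2.1,
        (principal_add_omega0_opow α) y.2.2
          (lt_of_le_of_lt (Ordinal.sub_le_self _ _) x.2.2)⟩⟩

instance : One (Bicyclic α) :=
  ⟨⟨(0, 0), opow_pos α omega0_pos, opow_pos α omega0_pos⟩⟩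

end Bicyclic

/-- The Bruck extension of a semigroup `S`. -/
def Bruck (S : Type*) : Type _ := ℕ × S × ℕ

def Bruck.mk {S : Type*} (n : ℕ) (s : S) (m : ℕ) : Bruck S := (n, s, m)

instance {S : Type*} [Mul S] : Mul (Bruck S) :=
  ⟨fun x y =>
    if x.2.2 < y.1 then (x.1 + y.1 - x.2.2, y.2.1, y.2.2)
    else if y.1 < x.2.2 then (x.1, x.2.1, y.2.2 + x.2.2 - y.1)
    else (x.1, x.2.1 * y.2.1, y.2.2)⟩

/-- The Bruck extension of `S` with an adjoined (absorbing) zero `0*`. -/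
abbrev BruckZero (S : Type*) := WithZero (Bruck S)

/-- The box `[n,m]` in the Bruck extension with zero. -/
def box (S : Type*) (n m : ℕ) : Set (BruckZero S) :=
  {x | ∃ s : S, x = ↑(Bruck.mk n s m)}

/-- A topology on `X` is shift-continuous if all two-sided shifts `x ↦ a * x * b`
are continuous. -/
def ShiftContinuous (X : Type*) [Mul X] [TopologicalSpace X] : Prop :=
  ∀ a b : X, Continuous fun x => a * x * b


open Filter

namespace Bicyclic
variable {α : Ordinal}

lemma one_val : (1 : Bicyclic α).val = (0, 0) := rfl

lemma one_mul' (t : Bicyclic α) : 1 * t = t := by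
  apply Subtype.ext
  show (if ((1:Bicyclic α)).val.2 ≤ t.val.1 then _ else _ : Bicyclic α).val = t.val
  refine (congrArg Subtype.val (if_pos (by rw [one_val]; exact zero_le))).trans ?_
  simp [one_val, Ordinal.sub_zero]

lemma mul_one' (t : Bicyclic α) : t * 1 = t := by
  apply Subtype.ext
  show (if t.val.2 ≤ ((1:Bicyclic α)).val.1 then _ else _ : Bicyclic α).val = t.val
  rcases eq_or_ne t.val.2 0 with h | h
  · refine (congrArg Subtype.val (if_pos (by rw [one_val]; exact h.le))).trans ?_
    simp [one_val, h, Ordinal.sub_zero]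
    exact Prod.ext rfl h.symm
  · refine (congrArg Subtype.val (if_neg (by rw [one_val]; simpa [nonpos_iff_eq_zero] using h))).trans ?_
    simp [one_val, Ordinal.sub_zero]


end Bicyclic

namespace Bruck
variable {S : Type*} [Mul S]

set_option linter.unusedSectionVars false

@[simp] lemma mk_1 (n : ℕ) (s : S) (m : ℕ) : (Bruck.mk n s m).1 = n := rfl
@[simp] lemma mk_21 (n : ℕ) (s : S) (m : ℕ) : (Bruck.mk n s m).2.1 = s := rfl
@[simp] lemma mk_22 (n : ℕ) (s : S) (m : ℕ) : (Bruck.mk n s m).2.2 = m := rfl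

lemma mul_def (x y : Bruck S) : x * y =
    if x.2.2 < y.1 then (x.1 + y.1 - x.2.2, y.2.1, y.2.2)
    else if y.1 < x.2.2 then (x.1, x.2.1, y.2.2 + x.2.2 - y.1)
    else (x.1, x.2.1 * y.2.1, y.2.2) := rfl

lemma eta (z : Bruck S) : (z.1, z.2.1, z.2.2) = z := rfl

variable {α : Ordinal}

/-- right unit -/
lemma mul_unit (z : Bruck (Bicyclic α)) : z * (Bruck.mk 0 1 0 : Bruck (Bicyclic α)) = z := by
  rw [mul_def]
  rcases Nat.eq_zero_or_pos z.2.2 with h | h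
  · rw [if_neg (by simp only [mk_1, mk_22]; omega), if_neg (by simp only [mk_1, mk_22]; omega)]
    show (z.1, z.2.1 * 1, (0:ℕ)) = z
    rw [Bicyclic.mul_one']
    rw [← h]; rfl
  · rw [if_neg (by simp only [mk_1, mk_22]; omega), if_pos (by simp only [mk_1, mk_22]; omega)]
    show (z.1, z.2.1, 0 + z.2.2 - 0) = z
    simp [eta]; rfl

/-- left unit -/
lemma unit_mul (z : Bruck (Bicyclic α)) : (Bruck.mk 0 1 0 : Bruck (Bicyclic α)) * z = z := by
  rw [mul_def]
  rcases Nat.eq_zero_or_pos z.1 with h | h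
  · rw [if_neg (by simp only [mk_1, mk_22]; omega), if_neg (by simp only [mk_1, mk_22]; omega)]
    show ((0:ℕ), 1 * z.2.1, z.2.2) = z
    rw [Bicyclic.one_mul']
    rw [← h]; rfl
  · rw [if_pos (by simp only [mk_1, mk_22]; omega)]
    show (0 + z.1 - 0, z.2.1, z.2.2) = z
    simp [eta]; rfl

lemma eps_mul (z : Bruck (Bicyclic α)) (a : ℕ) (h : a + 1 ≤ z.1) :
    (Bruck.mk (a+1) 1 (a+1) : Bruck (Bicyclic α)) * z = z := by
  rw [mul_def]
  rcases eq_or_lt_of_le h with h' | h'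
  · rw [if_neg (by simp only [mk_1, mk_22]; omega), if_neg (by simp only [mk_1, mk_22]; omega)]
    show ((a+1 : ℕ), 1 * z.2.1, z.2.2) = z
    rw [Bicyclic.one_mul', h']; rfl
  · rw [if_pos (by exact h')]
    show ((a+1) + z.1 - (a+1), z.2.1, z.2.2) = z
    rw [Nat.add_sub_cancel_left]; rfl

lemma mul_eps (z : Bruck (Bicyclic α)) (b : ℕ) (h : b + 1 ≤ z.2.2) :
    z * (Bruck.mk (b+1) 1 (b+1) : Bruck (Bicyclic α)) = z := by
  rw [mul_def]
  rcases eq_or_lt_of_le h with h' | h'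
  · rw [if_neg (by simp only [mk_1, mk_22]; omega), if_neg (by simp only [mk_1, mk_22]; omega)]
    show (z.1, z.2.1 * 1, (b+1:ℕ)) = z
    rw [Bicyclic.mul_one', h']; rfl
  · rw [if_neg (by simp only [mk_1, mk_22]; omega), if_pos (by exact h')]
    show (z.1, z.2.1, (b+1) + z.2.2 - (b+1)) = z
    rw [Nat.add_sub_cancel_left]; rfl

lemma eps_mul_self (z : Bruck (Bicyclic α)) :
    (Bruck.mk (z.1+1) 1 (z.1+1) : Bruck (Bicyclic α)) * z = Bruck.mk (z.1+1) 1 (z.2.2+1) := by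
  rw [mul_def]
  rw [if_neg (by simp only [mk_1, mk_22]; omega), if_pos (by simp only [mk_1, mk_22]; omega)]
  show ((z.1 + 1 : ℕ), (1 : Bicyclic α), z.2.2 + (z.1+1) - z.1) = _
  congr 2
  omega

lemma self_mul_eps (z : Bruck (Bicyclic α)) :
    z * (Bruck.mk (z.2.2+1) 1 (z.2.2+1) : Bruck (Bicyclic α)) = Bruck.mk (z.1+1) 1 (z.2.2+1) := by
  rw [mul_def]
  rw [if_pos (by simp only [mk_1, mk_22]; omega)]
  show (z.1 + (z.2.2+1) - z.2.2, (1 : Bicyclic α), (z.2.2 + 1 : ℕ)) = _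
  congr 2
  omega


end Bruck

/-- Every nonzero point of `B⁰(B_k)` has an open neighborhood meeting only
finitely many boxes. -/
lemma star_lemma (k : ℕ) [TopologicalSpace (BruckZero (Bicyclic k))]
    [T2Space (BruckZero (Bicyclic k))] (hτ : ShiftContinuous (BruckZero (Bicyclic k)))
    (x : Bruck (Bicyclic k)) :
    ∃ N : Set (BruckZero (Bicyclic k)), IsOpen N ∧ (↑x : BruckZero (Bicyclic k)) ∈ N ∧
      {p : ℕ × ℕ | (N ∩ box (Bicyclic k) p.1 p.2).Nonempty}.Finite := by
  by_contra hcon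
  push_neg at hcon
  set A : Set (BruckZero (Bicyclic k)) :=
    {y | ∀ z : Bruck (Bicyclic k), y = ↑z → x.1 + 1 ≤ z.1} with hAdef
  set B : Set (BruckZero (Bicyclic k)) :=
    {y | ∀ z : Bruck (Bicyclic k), y = ↑z → x.2.2 + 1 ≤ z.2.2} with hBdef
  have hcl : (↑x : BruckZero (Bicyclic k)) ∈ closure (A ∪ B) := by
    rw [mem_closure_iff_nhds]
    intro N hN
    obtain ⟨O, hON, hOopen, hxO⟩ := mem_nhds_iff.mp hN
    have hinf : {p : ℕ × ℕ | (O ∩ box (Bicyclic k) p.1 p.2).Nonempty}.Infinite :=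
      fun hf => hcon O hOopen hxO hf
    have hF : (Set.Iic x.1 ×ˢ Set.Iic x.2.2 : Set (ℕ × ℕ)).Finite :=
      (Set.finite_Iic x.1).prod (Set.finite_Iic x.2.2)
    obtain ⟨p, hp, hpF⟩ := (hinf.diff hF).nonempty
    obtain ⟨w, hwO, s, hws⟩ := hp
    refine ⟨w, hON hwO, ?_⟩
    have hnot : ¬ (p.1 ≤ x.1 ∧ p.2 ≤ x.2.2) := by
      simpa [Set.mem_prod, Prod.le_def] using hpF
    rcases Nat.lt_or_ge x.1 p.1 with h1 | h1
    · left
      intro z hz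
      have heq : Bruck.mk p.1 s p.2 = z := WithZero.coe_inj.mp (hws.symm.trans hz)
      rw [← heq]; simpa using h1
    · right
      intro z hz
      have heq : Bruck.mk p.1 s p.2 = z := WithZero.coe_inj.mp (hws.symm.trans hz)
      rw [← heq]; simp; omega
  have hne : (𝓝 (↑x : BruckZero (Bicyclic k)) ⊓ 𝓟 (A ∪ B)).NeBot :=
    mem_closure_iff_clusterPt.mp hcl
  haveI := hne
  set 𝒰 := Ultrafilter.of (𝓝 (↑x : BruckZero (Bicyclic k)) ⊓ 𝓟 (A ∪ B)) with h𝒰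
  have hle : (𝒰 : Filter (BruckZero (Bicyclic k))) ≤ 𝓝 ↑x ⊓ 𝓟 (A ∪ B) :=
    Ultrafilter.of_le _
  have hleN : (𝒰 : Filter (BruckZero (Bicyclic k))) ≤ 𝓝 ↑x := hle.trans inf_le_left
  have hAB : A ∪ B ∈ 𝒰 := hle (Filter.mem_inf_of_right (Filter.mem_principal_self _))
  have key : ∀ h : BruckZero (Bicyclic k) → BruckZero (Bicyclic k), Continuous h →
      (∃ y ∈ 𝒰, ∀ w ∈ y, h w = w) → h ↑x = ↑x := by
    rintro h hcont ⟨y, hy𝒰, hy⟩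
    have hmap : Filter.map h ↑𝒰 = ↑𝒰 := by
      rw [Filter.map_congr (Filter.eventuallyEq_of_mem hy𝒰 hy), Filter.map_id']
    have hlim2 : (𝒰 : Filter (BruckZero (Bicyclic k))) ≤ 𝓝 (h ↑x) := by
      rw [← hmap]
      exact (Filter.map_mono hleN).trans (hcont.tendsto _)
    exact eq_of_nhds_neBot (Filter.neBot_of_le (le_inf hlim2 hleN))
  rcases Ultrafilter.union_mem_iff.mp hAB with hA | hB
  · have hcr := key
      (fun y => ↑(Bruck.mk (x.1+1) 1 (x.1+1) : Bruck (Bicyclic k)) * y *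
        ↑(Bruck.mk 0 1 0 : Bruck (Bicyclic k))) (hτ _ _) ⟨A, hA, ?_⟩
    · rw [← WithZero.coe_mul, ← WithZero.coe_mul, Bruck.eps_mul_self x,
        Bruck.mul_unit] at hcr
      have h2 := congrArg Prod.fst (WithZero.coe_inj.mp hcr)
      simp only [Bruck.mk_1] at h2
      omega
    · intro w hw
      rcases eq_or_ne w 0 with rfl | h0
      · simp
      · obtain ⟨z, rfl⟩ := WithZero.ne_zero_iff_exists.mp h0
        have hz : x.1 + 1 ≤ z.1 := hw z rfl
        rw [← WithZero.coe_mul, ← WithZero.coe_mul, Bruck.eps_mul z x.1 hz,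
          Bruck.mul_unit]
  · have hcr := key
      (fun y => ↑(Bruck.mk 0 1 0 : Bruck (Bicyclic k)) * y *
        ↑(Bruck.mk (x.2.2+1) 1 (x.2.2+1) : Bruck (Bicyclic k))) (hτ _ _) ⟨B, hB, ?_⟩
    · rw [← WithZero.coe_mul, ← WithZero.coe_mul, Bruck.unit_mul x,
        Bruck.self_mul_eps x] at hcr
      have h2 := congrArg (fun t : Bruck (Bicyclic k) => t.2.2) (WithZero.coe_inj.mp hcr)
      simp only [Bruck.mk_22] at h2
      omega
    · intro w hw
      rcases eq_or_ne w 0 with rfl | h0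
      · simp
      · obtain ⟨z, rfl⟩ := WithZero.ne_zero_iff_exists.mp h0
        have hz : x.2.2 + 1 ≤ z.2.2 := hw z rfl
        rw [← WithZero.coe_mul, ← WithZero.coe_mul, Bruck.unit_mul z,
          Bruck.mul_eps z x.2.2 hz]
/-- For a locally compact Hausdorff shift-continuous topology on `B⁰(B_k)`
with non-isolated zero, any two open neighborhoods `U, V` of `0*` with compact closures
satisfy `U ∩ [n,m] = V ∩ [n,m]` for all but finitely many boxes `[n,m]`. -/
theorem neighborhoods_agree_on_cofinitely_many_boxes (k : ℕ)
    [TopologicalSpace (BruckZero (Bicyclic k))] [T2Space (BruckZero (Bicyclic k))]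
    [LocallyCompactSpace (BruckZero (Bicyclic k))]
    (hτ : ShiftContinuous (BruckZero (Bicyclic k)))
    (h0 : ¬ IsOpen ({0} : Set (BruckZero (Bicyclic k))))
    (U V : Set (BruckZero (Bicyclic k)))
    (hU : IsOpen U) (hV : IsOpen V) (h0U : (0 : BruckZero (Bicyclic k)) ∈ U)
    (h0V : (0 : BruckZero (Bicyclic k)) ∈ V)
    (hcU : IsCompact (closure U)) (hcV : IsCompact (closure V)) :
    {p : ℕ × ℕ | U ∩ box (Bicyclic k) p.1 p.2 ≠ V ∩ box (Bicyclic k) p.1 p.2}.Finite := by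
  classical
  obtain ⟨N, hNopen, hNmem, hNfin⟩ :
      ∃ N : Bruck (Bicyclic k) → Set (BruckZero (Bicyclic k)),
        (∀ z, IsOpen (N z)) ∧ (∀ z, (↑z : BruckZero (Bicyclic k)) ∈ N z) ∧
        (∀ z, {p : ℕ × ℕ | (N z ∩ box (Bicyclic k) p.1 p.2).Nonempty}.Finite) := by
    choose N h1 h2 h3 using star_lemma k hτ
    exact ⟨N, h1, h2, h3⟩
  have key : ∀ (W K : Set (BruckZero (Bicyclic k))), IsCompact K →
      (0 : BruckZero (Bicyclic k)) ∉ K → W ⊆ K →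
      {p : ℕ × ℕ | (W ∩ box (Bicyclic k) p.1 p.2).Nonempty}.Finite := by
    intro W K hK h0K hWK
    have hcover : K ⊆ ⋃ z : Bruck (Bicyclic k), N z := by
      intro y hy
      rcases eq_or_ne y 0 with rfl | hy0
      · exact absurd hy h0K
      · obtain ⟨z, rfl⟩ := WithZero.ne_zero_iff_exists.mp hy0
        exact Set.mem_iUnion.mpr ⟨z, hNmem z⟩
    obtain ⟨t, ht⟩ := hK.elim_finite_subcover N hNopen hcover
    have hsub : {p : ℕ × ℕ | (W ∩ box (Bicyclic k) p.1 p.2).Nonempty} ⊆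
        ⋃ z ∈ t, {p : ℕ × ℕ | (N z ∩ box (Bicyclic k) p.1 p.2).Nonempty} := by
      rintro p ⟨w, hwW, hwb⟩
      have hw : w ∈ ⋃ z ∈ t, N z := ht (hWK hwW)
      obtain ⟨z, hzt, hwz⟩ := Set.mem_iUnion₂.mp hw
      exact Set.mem_biUnion hzt ⟨w, hwz, hwb⟩
    exact ((t.finite_toSet.biUnion fun z _ => hNfin z).subset hsub)
  have h1 : {p : ℕ × ℕ | ((U \ V) ∩ box (Bicyclic k) p.1 p.2).Nonempty}.Finite :=
    key (U \ V) (closure U ∩ Vᶜ) (hcU.inter_right hV.isClosed_compl)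
      (fun hc => hc.2 h0V) (fun y hy => ⟨subset_closure hy.1, hy.2⟩)
  have h2 : {p : ℕ × ℕ | ((V \ U) ∩ box (Bicyclic k) p.1 p.2).Nonempty}.Finite :=
    key (V \ U) (closure V ∩ Uᶜ) (hcV.inter_right hU.isClosed_compl)
      (fun hc => hc.2 h0U) (fun y hy => ⟨subset_closure hy.1, hy.2⟩)
  refine (h1.union h2).subset ?_
  intro p hp
  rw [Set.mem_setOf_eq] at hp
  by_contra hc
  simp only [Set.mem_union, Set.mem_setOf_eq, not_or] at hc
  apply hp
  ext w
  constructor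
  · rintro ⟨hwU, hwb⟩
    refine ⟨?_, hwb⟩
    by_contra hwV
    exact hc.1 ⟨w, ⟨hwU, hwV⟩, hwb⟩
  · rintro ⟨hwV, hwb⟩
    refine ⟨?_, hwb⟩
    by_contra hwU
    exact hc.2 ⟨w, ⟨hwV, hwU⟩, hwb⟩
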